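/- Let c_v > 1/2, ρ₋, ρ₊ > 0 and 0 < p₋ < p₊, and set W := 2c_v(p₊−p₋)²/((2c_v+1)p₊ + p₋). Then there exists η ∈ (0, W) such that for every v₋ > 0 with W − η < ρ₋v₋² < W the following holds: with ρ_K := ρ₋(p₊−p₋)/(p₊−p₋−ρ₋v₋²), there exists δ > 0 with ρ_K − δ > ρ₋ such that for all ρ₁ ∈ (ρ_K−δ, ρ_K) and ρ₂ ∈ (ρ_K, ρ_K+δ), setting β := (ρ₋(ρ₂−ρ₁)v₋)/(ρ₁(ρ₂−ρ₋)) − √((ρ₂−ρ₁)(ρ₁−ρ₋)[(ρ₂−ρ₋)(p₊−p₋)−ρ₋ρ₂v₋²])/(ρ₁(ρ₂−ρ₋)), p₁ := p₋(ρ₁/ρ₋)^{(c_v+1)/c_v}, p₂ := p₋(ρ₂/ρ₋)^{(c_v+1)/c_v}, one has ε̃₁ > 0 and ε̃₂ > 0, where ε̃₁ := v₋² − β² − 2c_v(p₁/ρ₁ − p₋/ρ₋) − 2(ρ₁−ρ₋)(p₁β−p₋v₋)/(ρ₋ρ₁(v₋−β)) + (p₁−p₋)/ρ₁ − ρ₋(v₋−β)²/(ρ₁−ρ₋)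 and ε̃₂ := v₋² − 2c_v(p₂/ρ₂ − p₋/ρ₋) − 2(ρ₁−ρ₋)(p₁β−p₋v₋)/(ρ₋ρ₁(v₋−β)) + (p₂−p₊)/ρ₂ + 2(ρ₂−ρ₁)p₁/(ρ₁ρ₂). -/

import Mathlib

/-- The second velocity component `β` of the subsolution in region `Ω₁`. -/
noncomputable def betaDef (ρm pm pp vm ρ1 ρ2 : ℝ) : ℝ :=
  ρm * (ρ2 - ρ1) * vm / (ρ1 * (ρ2 - ρm))
    - Real.sqrt ((ρ2 - ρ1) * (ρ1 - ρm)
        * ((ρ2 - ρm) * (pp - pm) - ρm * ρ2 * vm ^ 2)) / (ρ1 * (ρ2 - ρm))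

/-- The pressure of the subsolution, chosen so that the entropy is constant. -/
noncomputable def pressureDef (cv ρm pm ρ : ℝ) : ℝ := pm * (ρ / ρm) ^ ((cv + 1) / cv)

/-- The quantity `ε̃₁` of the particular fan subsolution. -/
noncomputable def eps1tilde (cv ρm pm pp vm ρ1 ρ2 : ℝ) : ℝ :=
  vm ^ 2 - betaDef ρm pm pp vm ρ1 ρ2 ^ 2
    - 2 * cv * (pressureDef cv ρm pm ρ1 / ρ1 - pm / ρm)
    - 2 * ((ρ1 - ρm) * (pressureDef cv ρm pm ρ1 * betaDef ρm pm pp vm ρ1 ρ2 - pm * vm))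
        / (ρm * ρ1 * (vm - betaDef ρm pm pp vm ρ1 ρ2))
    + (pressureDef cv ρm pm ρ1 - pm) / ρ1
    - ρm * (vm - betaDef ρm pm pp vm ρ1 ρ2) ^ 2 / (ρ1 - ρm)

/-- The quantity `ε̃₂` of the particular fan subsolution. -/
noncomputable def eps2tilde (cv ρm pm pp vm ρ1 ρ2 : ℝ) : ℝ :=
  vm ^ 2 - 2 * cv * (pressureDef cv ρm pm ρ2 / ρ2 - pm / ρm)
    - 2 * ((ρ1 - ρm) * (pressureDef cv ρm pm ρ1 * betaDef ρm pm pp vm ρ1 ρ2 - pm * vm))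
        / (ρm * ρ1 * (vm - betaDef ρm pm pp vm ρ1 ρ2))
    + (pressureDef cv ρm pm ρ2 - pp) / ρ2
    + 2 * (ρ2 - ρ1) * pressureDef cv ρm pm ρ1 / (ρ1 * ρ2)

set_option maxHeartbeats 3000000


lemma key_log (a : ℝ) (ha : 2 < a) : ∀ r : ℝ, 1 < r →
    (a + 1) * (Real.log (a * r + 1) - Real.log (a + r)) < (a - 1) * Real.log r := by
  have ha0 : (0:ℝ) < a := by linarith
  set φ : ℝ → ℝ := fun x => (a + 1) * (Real.log (a * x + 1) - Real.log (a + x))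
      - (a - 1) * Real.log x with hφ
  have hasD : ∀ x : ℝ, 1 ≤ x →
      HasDerivAt φ ((a + 1) * (a / (a * x + 1) - 1 / (a + x)) - (a - 1) * x⁻¹) x := by
    intro x hx
    have hP : (0:ℝ) < a * x + 1 := by nlinarith
    have hQ : (0:ℝ) < a + x := by linarith
    have hx0 : (0:ℝ) < x := by linarith
    have h1 : HasDerivAt (fun y => Real.log (a * y + 1)) (a / (a * x + 1)) x := by
      have := (((hasDerivAt_id x).const_mul a).add_const 1).log hP.ne'
      simpa using this
    have h2 : HasDerivAt (fun y => Real.log (a + y)) (1 / (a + x)) x := by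
      have := ((hasDerivAt_id x).const_add a).log hQ.ne'
      simpa using this
    have h3 : HasDerivAt Real.log x⁻¹ x := Real.hasDerivAt_log hx0.ne'
    exact ((h1.sub h2).const_mul (a + 1)).sub (h3.const_mul (a - 1))
  have hanti : StrictAntiOn φ (Set.Ici 1) := by
    apply strictAntiOn_of_deriv_neg (convex_Ici 1)
    · exact fun x hx => ((hasD x hx).continuousAt).continuousWithinAt
    · intro x hx
      rw [interior_Ici] at hx
      have hx1 : (1:ℝ) < x := hx
      have hP : (0:ℝ) < a * x + 1 := by nlinarith
      have hQ : (0:ℝ) < a + x := by linarith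
      have hx0 : (0:ℝ) < x := by linarith
      rw [(hasD x hx1.le).deriv]
      have key : (a + 1) * (a / (a * x + 1) - 1 / (a + x)) - (a - 1) * x⁻¹
          = -((a - 1) * a * (x - 1) ^ 2) / (x * (a * x + 1) * (a + x)) := by
        field_simp
        ring
      rw [key]
      have hnum : 0 < (a - 1) * a * (x - 1) ^ 2 :=
        mul_pos (mul_pos (by linarith) ha0) (pow_pos (by linarith) 2)
      have hden : 0 < x * (a * x + 1) * (a + x) := by positivity
      have := div_pos hnum hden
      rw [neg_div]
      linarith
  intro r hr
  have h := hanti (Set.self_mem_Ici) (Set.mem_Ici.2 hr.le) hr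
  have hφ1 : φ 1 = 0 := by simp [hφ]
  have : φ r < 0 := hφ1 ▸ h
  simp only [hφ] at this
  linarith

lemma key_ineq (cv pm pp : ℝ) (hcv : 1 / 2 < cv) (hpm : 0 < pm) (hpmp : pm < pp) :
    pm * (((2 * cv + 1) * pp + pm) / (pp + (2 * cv + 1) * pm)) ^ ((cv + 1) / cv) < pp := by
  have hcv0 : (0:ℝ) < cv := by linarith
  have ha : (2:ℝ) < 2 * cv + 1 := by linarith
  set a : ℝ := 2 * cv + 1 with hadef
  set r : ℝ := pp / pm with hrdef
  have hr1 : 1 < r := (one_lt_div hpm).2 hpmp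
  have hr0 : (0:ℝ) < r := by linarith
  have hbase : ((2 * cv + 1) * pp + pm) / (pp + (2 * cv + 1) * pm) = (a * r + 1) / (a + r) := by
    rw [hadef, hrdef]
    field_simp
    ring
  have hP : (0:ℝ) < a * r + 1 := by nlinarith
  have hQ : (0:ℝ) < a + r := by nlinarith
  have hargpos : 0 < (a * r + 1) / (a + r) := div_pos hP hQ
  have hlog := key_log a ha r hr1
  have hexp : (cv + 1) / cv = (a + 1) / (a - 1) := by
    rw [hadef]
    rw [div_eq_div_iff (by linarith) (by linarith)]
    ring
  have h2 : Real.log (((a * r + 1) / (a + r)) ^ ((cv + 1) / cv)) < Real.log r := by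
    rw [Real.log_rpow hargpos, hexp, Real.log_div hP.ne' hQ.ne']
    rw [div_mul_eq_mul_div, div_lt_iff₀ (by linarith : (0:ℝ) < a - 1)]
    calc (a + 1) * (Real.log (a * r + 1) - Real.log (a + r)) < (a - 1) * Real.log r := hlog
      _ = Real.log r * (a - 1) := by ring
  have h3 : ((a * r + 1) / (a + r)) ^ ((cv + 1) / cv) < r :=
    (Real.log_lt_log_iff (Real.rpow_pos_of_pos hargpos _) hr0).1 h2
  rw [hbase]
  calc pm * ((a * r + 1) / (a + r)) ^ ((cv + 1) / cv) < pm * r := by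
        exact (mul_lt_mul_iff_right₀ hpm).2 h3
    _ = pp := by rw [hrdef]; field_simp

lemma limit_eval (cv ρm pm pp : ℝ) (hcv : 1 / 2 < cv) (hρm : 0 < ρm)
    (hpm : 0 < pm) (hpmp : pm < pp) :
    eps1tilde cv ρm pm pp
        (Real.sqrt (2 * cv * (pp - pm) ^ 2 / ((2 * cv + 1) * pp + pm) / ρm))
        (ρm * ((2 * cv + 1) * pp + pm) / (pp + (2 * cv + 1) * pm))
        (ρm * ((2 * cv + 1) * pp + pm) / (pp + (2 * cv + 1) * pm))
      = (pp + (2 * cv + 1) * pm) * (2 * cv - 1)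
          * (pp - pm * (((2 * cv + 1) * pp + pm) / (pp + (2 * cv + 1) * pm)) ^ ((cv + 1) / cv))
          / (((2 * cv + 1) * pp + pm) * ρm)
    ∧ eps2tilde cv ρm pm pp
        (Real.sqrt (2 * cv * (pp - pm) ^ 2 / ((2 * cv + 1) * pp + pm) / ρm))
        (ρm * ((2 * cv + 1) * pp + pm) / (pp + (2 * cv + 1) * pm))
        (ρm * ((2 * cv + 1) * pp + pm) / (pp + (2 * cv + 1) * pm))
      = (pp + (2 * cv + 1) * pm) * (2 * cv - 1)
          * (pp - pm * (((2 * cv + 1) * pp + pm) / (pp + (2 * cv + 1) * pm)) ^ ((cv + 1) / cv))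
          / (((2 * cv + 1) * pp + pm) * ρm) := by
  have hcv0 : (0:ℝ) < cv := by linarith
  have hA : (0:ℝ) < pp + (2 * cv + 1) * pm := by nlinarith
  have hB : (0:ℝ) < (2 * cv + 1) * pp + pm := by nlinarith
  have hW : (0:ℝ) < 2 * cv * (pp - pm) ^ 2 / ((2 * cv + 1) * pp + pm) := by
    apply div_pos _ hB; nlinarith
  have hρK : ρm < ρm * ((2 * cv + 1) * pp + pm) / (pp + (2 * cv + 1) * pm) := by
    rw [lt_div_iff₀ hA]
    nlinarith [mul_pos hρm (show (0:ℝ) < 2 * cv * (pp - pm) by nlinarith)]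
  have hρKne : ρm * ((2 * cv + 1) * pp + pm) / (pp + (2 * cv + 1) * pm) ≠ 0 := by
    positivity
  have hρKmne : ρm * ((2 * cv + 1) * pp + pm) / (pp + (2 * cv + 1) * pm) - ρm ≠ 0 :=
    sub_ne_zero.2 (ne_of_gt hρK)
  have hbeta0 : betaDef ρm pm pp
      (Real.sqrt (2 * cv * (pp - pm) ^ 2 / ((2 * cv + 1) * pp + pm) / ρm))
      (ρm * ((2 * cv + 1) * pp + pm) / (pp + (2 * cv + 1) * pm))
      (ρm * ((2 * cv + 1) * pp + pm) / (pp + (2 * cv + 1) * pm)) = 0 := by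
    simp [betaDef]
  have hpress : pressureDef cv ρm pm
      (ρm * ((2 * cv + 1) * pp + pm) / (pp + (2 * cv + 1) * pm))
      = pm * (((2 * cv + 1) * pp + pm) / (pp + (2 * cv + 1) * pm)) ^ ((cv + 1) / cv) := by
    rw [pressureDef]
    congr 2
    field_simp
  have hρmK : ρm * (ρm * ((2 * cv + 1) * pp + pm) / (pp + (2 * cv + 1) * pm)) ≠ 0 :=
    mul_ne_zero hρm.ne' hρKne
  have hppm : pp - pm ≠ 0 := sub_ne_zero.2 (ne_of_gt hpmp)
  have hKm : ρm * ((2 * cv + 1) * pp + pm) / (pp + (2 * cv + 1) * pm) - ρm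
      = 2 * cv * ρm * (pp - pm) / (pp + (2 * cv + 1) * pm) := by
    field_simp
    ring
  constructor
  · rw [eps1tilde, hbeta0, hpress]
    generalize hy : (((2 * cv + 1) * pp + pm) / (pp + (2 * cv + 1) * pm)) ^ ((cv + 1) / cv) = y
    generalize hv : Real.sqrt (2 * cv * (pp - pm) ^ 2 / ((2 * cv + 1) * pp + pm) / ρm) = v0
    have hv0pos : 0 < v0 := hv ▸ Real.sqrt_pos.2 (div_pos hW hρm)
    have hv0sq : v0 ^ 2 = 2 * cv * (pp - pm) ^ 2 / ((2 * cv + 1) * pp + pm) / ρm := by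
      rw [← hv]; exact Real.sq_sqrt (le_of_lt (div_pos hW hρm))
    have hcancel : ∀ X Y : ℝ, Y ≠ 0 →
        2 * (X * (pm * y * 0 - pm * v0)) / (Y * (v0 - 0)) = -(2 * X * pm / Y) := by
      intro X Y hY
      rw [sub_zero]
      field_simp
      ring
    rw [hcancel _ _ hρmK, sub_zero, hv0sq, hKm]
    have hB2 : pp * (2 * cv + 1) + pm ≠ 0 := by nlinarith
    have hA2 : pp + pm * (2 * cv + 1) ≠ 0 := by nlinarith
    field_simp
    ring
  · rw [eps2tilde, hbeta0, hpress]
    generalize hy : (((2 * cv + 1) * pp + pm) / (pp + (2 * cv + 1) * pm)) ^ ((cv + 1) / cv) = y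
    generalize hv : Real.sqrt (2 * cv * (pp - pm) ^ 2 / ((2 * cv + 1) * pp + pm) / ρm) = v0
    have hv0pos : 0 < v0 := hv ▸ Real.sqrt_pos.2 (div_pos hW hρm)
    have hv0sq : v0 ^ 2 = 2 * cv * (pp - pm) ^ 2 / ((2 * cv + 1) * pp + pm) / ρm := by
      rw [← hv]; exact Real.sq_sqrt (le_of_lt (div_pos hW hρm))
    have hcancel : ∀ X Y : ℝ, Y ≠ 0 →
        2 * (X * (pm * y * 0 - pm * v0)) / (Y * (v0 - 0)) = -(2 * X * pm / Y) := by
      intro X Y hY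
      rw [sub_zero]
      field_simp
      ring
    rw [hcancel _ _ hρmK, hv0sq]
    have hB2 : pp * (2 * cv + 1) + pm ≠ 0 := by nlinarith
    have hA2 : pp + pm * (2 * cv + 1) ≠ 0 := by nlinarith
    field_simp
    ring

lemma eps_contAt (cv ρm pm pp v r1 r2 : ℝ) (hρm : ρm ≠ 0) (h1 : r1 ≠ 0) (h2 : r2 ≠ 0)
    (h2m : r2 - ρm ≠ 0) (h1m : r1 - ρm ≠ 0)
    (hvb : v - betaDef ρm pm pp v r1 r2 ≠ 0) :
    ContinuousAt (fun q : ℝ × ℝ × ℝ => eps1tilde cv ρm pm pp q.1 q.2.1 q.2.2) (v, r1, r2) ∧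
    ContinuousAt (fun q : ℝ × ℝ × ℝ => eps2tilde cv ρm pm pp q.1 q.2.1 q.2.2) (v, r1, r2) := by
  have hden : r1 * (r2 - ρm) ≠ 0 := mul_ne_zero h1 h2m
  have cfst : ContinuousAt (fun q : ℝ × ℝ × ℝ => q.1) (v, r1, r2) :=
    continuous_fst.continuousAt
  have c21 : ContinuousAt (fun q : ℝ × ℝ × ℝ => q.2.1) (v, r1, r2) :=
    (continuous_fst.comp continuous_snd).continuousAt
  have c22 : ContinuousAt (fun q : ℝ × ℝ × ℝ => q.2.2) (v, r1, r2) :=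
    (continuous_snd.comp continuous_snd).continuousAt
  have hbeta : ContinuousAt (fun q : ℝ × ℝ × ℝ => betaDef ρm pm pp q.1 q.2.1 q.2.2)
      (v, r1, r2) := by
    simp only [betaDef]
    apply ContinuousAt.sub
    · exact ContinuousAt.div (((continuousAt_const.mul (c22.sub c21)).mul cfst))
        (c21.mul (c22.sub continuousAt_const)) hden
    · apply ContinuousAt.div
      · apply ContinuousAt.comp (Real.continuous_sqrt.continuousAt)
        exact ((c22.sub c21).mul (c21.sub continuousAt_const)).mul
          (((c22.sub continuousAt_const).mul continuousAt_const).sub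
            ((continuousAt_const.mul c22).mul (cfst.pow 2)))
      · exact c21.mul (c22.sub continuousAt_const)
      · exact hden
  have hp1 : ContinuousAt (fun q : ℝ × ℝ × ℝ => pressureDef cv ρm pm q.2.1) (v, r1, r2) := by
    simp only [pressureDef]
    exact continuousAt_const.mul
      ((c21.div continuousAt_const hρm).rpow_const (Or.inl (div_ne_zero h1 hρm)))
  have hp2 : ContinuousAt (fun q : ℝ × ℝ × ℝ => pressureDef cv ρm pm q.2.2) (v, r1, r2) := by
    simp only [pressureDef]
    exact continuousAt_const.mul
      ((c22.div continuousAt_const hρm).rpow_const (Or.inl (div_ne_zero h2 hρm)))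
  have hmid : ContinuousAt (fun q : ℝ × ℝ × ℝ =>
      2 * ((q.2.1 - ρm) * (pressureDef cv ρm pm q.2.1 * betaDef ρm pm pp q.1 q.2.1 q.2.2
        - pm * q.1)) / (ρm * q.2.1 * (q.1 - betaDef ρm pm pp q.1 q.2.1 q.2.2))) (v, r1, r2) := by
    apply ContinuousAt.div
    · exact continuousAt_const.mul ((c21.sub continuousAt_const).mul
        ((hp1.mul hbeta).sub (continuousAt_const.mul cfst)))
    · exact (continuousAt_const.mul c21).mul (cfst.sub hbeta)
    · exact mul_ne_zero (mul_ne_zero hρm h1) hvb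
  constructor
  · simp only [eps1tilde]
    apply ContinuousAt.sub
    apply ContinuousAt.add
    apply ContinuousAt.sub
    apply ContinuousAt.sub
    apply ContinuousAt.sub
    · exact cfst.pow 2
    · exact hbeta.pow 2
    · exact continuousAt_const.mul ((hp1.div c21 h1).sub continuousAt_const)
    · exact hmid
    · exact (hp1.sub continuousAt_const).div c21 h1
    · exact (continuousAt_const.mul ((cfst.sub hbeta).pow 2)).div
        (c21.sub continuousAt_const) h1m
  · simp only [eps2tilde]
    apply ContinuousAt.add
    apply ContinuousAt.add
    apply ContinuousAt.sub
    apply ContinuousAt.sub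
    · exact cfst.pow 2
    · exact continuousAt_const.mul ((hp2.div c22 h2).sub continuousAt_const)
    · exact hmid
    · exact (hp2.sub continuousAt_const).div c22 h2
    · exact ((continuousAt_const.mul (c22.sub c21)).mul hp1).div (c21.mul c22)
        (mul_ne_zero h1 h2)

/-- Subsolution condition, part 2: positivity of `ε̃₁` and `ε̃₂` if `ρ₋v₋²` is close enough to
`W = 2c_v(p₊-p₋)²/((2c_v+1)p₊+p₋)` and `ρ₁, ρ₂` are close enough to `ρ_K`
(Section 3.8 of the paper). -/
theorem subsolution_condition_part2
    (cv ρm ρp pm pp : ℝ)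
    (hcv : 1 / 2 < cv) (hρm : 0 < ρm) (hρp : 0 < ρp) (hpm : 0 < pm) (hpmp : pm < pp) :
    ∃ η : ℝ, 0 < η ∧ η < 2 * cv * (pp - pm) ^ 2 / ((2 * cv + 1) * pp + pm) ∧
      ∀ vm : ℝ, 0 < vm →
        2 * cv * (pp - pm) ^ 2 / ((2 * cv + 1) * pp + pm) - η < ρm * vm ^ 2 →
        ρm * vm ^ 2 < 2 * cv * (pp - pm) ^ 2 / ((2 * cv + 1) * pp + pm) →
        ∃ δ : ℝ, 0 < δ ∧
          ρm < ρm * (pp - pm) / (pp - pm - ρm * vm ^ 2) - δ ∧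
          ∀ ρ1 ρ2 : ℝ,
            ρm * (pp - pm) / (pp - pm - ρm * vm ^ 2) - δ < ρ1 →
            ρ1 < ρm * (pp - pm) / (pp - pm - ρm * vm ^ 2) →
            ρm * (pp - pm) / (pp - pm - ρm * vm ^ 2) < ρ2 →
            ρ2 < ρm * (pp - pm) / (pp - pm - ρm * vm ^ 2) + δ →
              0 < eps1tilde cv ρm pm pp vm ρ1 ρ2 ∧
              0 < eps2tilde cv ρm pm pp vm ρ1 ρ2 := by
  have hcv0 : (0:ℝ) < cv := by linarith
  have hA : (0:ℝ) < pp + (2 * cv + 1) * pm := by nlinarith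
  have hB : (0:ℝ) < (2 * cv + 1) * pp + pm := by nlinarith
  have hppm : (0:ℝ) < pp - pm := by linarith
  set W := 2 * cv * (pp - pm) ^ 2 / ((2 * cv + 1) * pp + pm) with hWdef
  have hW : 0 < W := by rw [hWdef]; exact div_pos (by nlinarith) hB
  have hWlt : W < pp - pm := by
    rw [hWdef, div_lt_iff₀ hB]; nlinarith
  have hDW : 0 < pp - pm - W := by linarith
  set v0 := Real.sqrt (W / ρm) with hv0def
  have hv0 : 0 < v0 := Real.sqrt_pos.2 (div_pos hW hρm)
  have hv0sq : v0 ^ 2 = W / ρm := Real.sq_sqrt (div_pos hW hρm).le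
  have hv02 : ρm * v0 ^ 2 = W := by rw [hv0sq]; field_simp
  set K0 := ρm * ((2 * cv + 1) * pp + pm) / (pp + (2 * cv + 1) * pm) with hK0def
  have hK0 : ρm < K0 := by
    rw [hK0def, lt_div_iff₀ hA]
    nlinarith [mul_pos hρm (mul_pos (show (0:ℝ) < 2 * cv by linarith) hppm)]
  have hK0pos : 0 < K0 := hρm.trans hK0
  have hK0alt : K0 = ρm * (pp - pm) / (pp - pm - W) := by
    have key : ρm * ((2 * cv + 1) * pp + pm) * (pp - pm - W)
        = ρm * (pp - pm) * (pp + (2 * cv + 1) * pm) := by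
      rw [hWdef]; field_simp; ring
    rw [hK0def, div_eq_div_iff hA.ne' hDW.ne']
    exact key
  obtain ⟨hv1, hv2⟩ := limit_eval cv ρm pm pp hcv hρm hpm hpmp
  rw [← hWdef, ← hv0def, ← hK0def] at hv1 hv2
  have hkey := key_ineq cv pm pp hcv hpm hpmp
  have hEpos : 0 < (pp + (2 * cv + 1) * pm) * (2 * cv - 1)
      * (pp - pm * (((2 * cv + 1) * pp + pm) / (pp + (2 * cv + 1) * pm)) ^ ((cv + 1) / cv))
      / (((2 * cv + 1) * pp + pm) * ρm) :=
    div_pos (mul_pos (mul_pos hA (by linarith)) (by linarith)) (mul_pos hB hρm)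
  have hpos1 : 0 < eps1tilde cv ρm pm pp v0 K0 K0 := by rw [hv1]; exact hEpos
  have hpos2 : 0 < eps2tilde cv ρm pm pp v0 K0 K0 := by rw [hv2]; exact hEpos
  have hbeta0 : betaDef ρm pm pp v0 K0 K0 = 0 := by simp [betaDef]
  obtain ⟨hc1, hc2⟩ := eps_contAt cv ρm pm pp v0 K0 K0 hρm.ne' hK0pos.ne' hK0pos.ne'
    (sub_ne_zero.2 hK0.ne') (sub_ne_zero.2 hK0.ne')
    (by rw [hbeta0, sub_zero]; exact hv0.ne')
  have e1 := hc1.eventually (eventually_gt_nhds hpos1)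
  have e2 := hc2.eventually (eventually_gt_nhds hpos2)
  obtain ⟨r, hr, hball⟩ := Metric.eventually_nhds_iff.1 (e1.and e2)
  clear hv1 hv2 e1 e2 hc1 hc2 hpos1 hpos2 hEpos hkey hbeta0
  have hb1 : 0 < ρm * v0 * r / 2 := by
    have := mul_pos (mul_pos hρm hv0) hr; linarith
  have hb2 : 0 < (pp - pm - W) ^ 2 * r / (2 * ρm * (pp - pm)) :=
    div_pos (mul_pos (pow_pos hDW 2) hr) (mul_pos (mul_pos two_pos hρm) hppm)
  refine ⟨min (W / 2) (min (ρm * v0 * r / 2) ((pp - pm - W) ^ 2 * r / (2 * ρm * (pp - pm)))),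
    lt_min (by linarith) (lt_min hb1 hb2), ?_, ?_⟩
  · calc min (W / 2) (min (ρm * v0 * r / 2) ((pp - pm - W) ^ 2 * r / (2 * ρm * (pp - pm))))
        ≤ W / 2 := min_le_left _ _
      _ < W := by linarith
  · intro vm hvm h1 h2
    have hη2 : min (W / 2) (min (ρm * v0 * r / 2) ((pp - pm - W) ^ 2 * r / (2 * ρm * (pp - pm))))
        ≤ ρm * v0 * r / 2 := le_trans (min_le_right _ _) (min_le_left _ _)
    have hη3 : min (W / 2) (min (ρm * v0 * r / 2) ((pp - pm - W) ^ 2 * r / (2 * ρm * (pp - pm))))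
        ≤ (pp - pm - W) ^ 2 * r / (2 * ρm * (pp - pm)) :=
      le_trans (min_le_right _ _) (min_le_right _ _)
    set t := ρm * vm ^ 2 with htdef
    have ht0 : 0 < t := by rw [htdef]; positivity
    have hDt : 0 < pp - pm - t := by linarith
    have hDtW : pp - pm - W < pp - pm - t := by linarith
    set K := ρm * (pp - pm) / (pp - pm - t) with hKdef
    have hKm : ρm < K := by
      rw [hKdef, lt_div_iff₀ hDt]
      nlinarith [mul_pos hρm ht0]
    have hdiff : K0 - K = ρm * (pp - pm) * (W - t) / ((pp - pm - W) * (pp - pm - t)) := by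
      rw [hK0alt, hKdef]
      field_simp
      ring
    have hKK0 : K < K0 := by
      have hq : 0 < ρm * (pp - pm) * (W - t) / ((pp - pm - W) * (pp - pm - t)) :=
        div_pos (mul_pos (mul_pos hρm hppm) (by linarith)) (mul_pos hDW hDt)
      linarith
    have hKclose : K0 - K < r / 2 := by
      rw [hdiff, div_lt_iff₀ (mul_pos hDW hDt)]
      have s1 : ρm * (pp - pm) * (W - t) < ρm * (pp - pm)
          * (min (W / 2) (min (ρm * v0 * r / 2)
              ((pp - pm - W) ^ 2 * r / (2 * ρm * (pp - pm))))) := by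
        apply mul_lt_mul_of_pos_left (by linarith) (mul_pos hρm hppm)
      have s2 : ρm * (pp - pm) * (min (W / 2) (min (ρm * v0 * r / 2)
          ((pp - pm - W) ^ 2 * r / (2 * ρm * (pp - pm))))) ≤ (pp - pm - W) ^ 2 * r / 2 := by
        calc ρm * (pp - pm) * (min (W / 2) (min (ρm * v0 * r / 2)
            ((pp - pm - W) ^ 2 * r / (2 * ρm * (pp - pm)))))
            ≤ ρm * (pp - pm) * ((pp - pm - W) ^ 2 * r / (2 * ρm * (pp - pm))) :=
              mul_le_mul_of_nonneg_left hη3 (mul_pos hρm hppm).le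
          _ = (pp - pm - W) ^ 2 * r / 2 := by field_simp
      have s3 : (pp - pm - W) ^ 2 * r / 2 ≤ r / 2 * ((pp - pm - W) * (pp - pm - t)) := by
        nlinarith [mul_le_mul_of_nonneg_left hDtW.le hDW.le, hr]
      linarith
    have hvmlt : vm < v0 := by
      by_contra hle
      push_neg at hle
      have hsq : ρm * v0 ^ 2 ≤ ρm * vm ^ 2 :=
        mul_le_mul_of_nonneg_left (pow_le_pow_left₀ hv0.le hle 2) hρm.le
      rw [htdef] at h2
      linarith
    have hvclose : v0 - vm < r / 2 := by
      by_contra hge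
      push_neg at hge
      have hlb : ρm * v0 * r / 2 ≤ (v0 - vm) * (ρm * (v0 + vm)) := by
        nlinarith [mul_pos hρm hvm, hr, mul_pos hρm hv0]
      have heq : (v0 - vm) * (ρm * (v0 + vm)) = W - t := by
        rw [htdef]; linear_combination hv02
      linarith
    refine ⟨min (r / 4) ((K - ρm) / 2), lt_min (by linarith) (by linarith), ?_, ?_⟩
    · have := min_le_right (r / 4) ((K - ρm) / 2); linarith
    · intro ρ1 ρ2 ha1 ha2 ha3 ha4
      have hδ : min (r / 4) ((K - ρm) / 2) ≤ r / 4 := min_le_left _ _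
      have hd : dist ((vm, ρ1, ρ2) : ℝ × ℝ × ℝ) ((v0, K0, K0) : ℝ × ℝ × ℝ) < r := by
        rw [Prod.dist_eq, Prod.dist_eq, Real.dist_eq, Real.dist_eq, Real.dist_eq]
        have h1a : |vm - v0| < r := abs_lt.2 ⟨by linarith, by linarith⟩
        have h2a : |ρ1 - K0| < r := abs_lt.2 ⟨by linarith, by linarith⟩
        have h3a : |ρ2 - K0| < r := abs_lt.2 ⟨by linarith, by linarith⟩
        exact max_lt h1a (max_lt h2a h3a)
      exact hball hd
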